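/- If n > n₁ ≥ 2 and m > m₁ ≥ 0 are integers with F_n - F_{n₁} = 3^m - 3^{m₁}, then α^{n-4} < 3^m and 3^{m-1} ≤ α^{n-1}, where α = (1+√5)/2. Consequently 1 + (log 3 / log α)(m-1) < n < (log 3 / log α)·m + 4. -/

import Mathlib

open Real goldenRatio

lemma fib_le_gold_pow (k : ℕ) : ((Nat.fib (k+1) : ℝ)) ≤ goldenRatio ^ k := by
  have h := goldenRatio_mul_fib_succ_add_fib k
  have h1 : goldenRatio * Nat.fib (k+1) ≤ goldenRatio ^ (k+1) := by
    nlinarith [Nat.cast_nonneg (α := ℝ) (Nat.fib k)]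
  have h2 : goldenRatio * ((Nat.fib (k+1) : ℝ)) ≤ goldenRatio * goldenRatio ^ k := by
    rw [← pow_succ']; exact h1
  exact le_of_mul_le_mul_left h2 goldenRatio_pos

lemma gold_pow_le_fib (k : ℕ) : goldenRatio ^ k ≤ ((Nat.fib (k+2) : ℝ)) := by
  have h := goldenRatio_mul_fib_succ_add_fib (k+1)
  have hmono : ((Nat.fib (k+1) : ℝ)) ≤ Nat.fib (k+2) := by
    exact_mod_cast Nat.fib_le_fib_succ
  have hsq : goldenRatio ^ 2 = goldenRatio + 1 := goldenRatio_sq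
  have h1 : goldenRatio ^ 2 * goldenRatio ^ k ≤ goldenRatio ^ 2 * Nat.fib (k+2) := by
    rw [← pow_add]
    have e : 2 + k = k + 1 + 1 := by omega
    rw [e]
    nlinarith [goldenRatio_pos]
  have hg2 : (0:ℝ) < goldenRatio ^ 2 := by positivity
  exact le_of_mul_le_mul_left h1 hg2

theorem fib_pow3_size_bounds (n n₁ m m₁ : ℕ)
    (hn₁ : 2 ≤ n₁) (hn : n₁ < n) (hm : m₁ < m)
    (heq : (Nat.fib n : ℤ) - Nat.fib n₁ = 3 ^ m - 3 ^ m₁) :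
    ((1 + Real.sqrt 5) / 2) ^ ((n : ℤ) - 4) < 3 ^ m ∧
    (3 : ℝ) ^ ((m : ℤ) - 1) ≤ ((1 + Real.sqrt 5) / 2) ^ ((n : ℤ) - 1) ∧
    1 + (Real.log 3 / Real.log ((1 + Real.sqrt 5) / 2)) * ((m : ℝ) - 1) < n ∧
    (n : ℝ) < (Real.log 3 / Real.log ((1 + Real.sqrt 5) / 2)) * m + 4 := by
  have hg1 : (1:ℝ) < goldenRatio := one_lt_goldenRatio
  have hg0 : (0:ℝ) < goldenRatio := goldenRatio_pos
  have hn3 : 3 ≤ n := by omega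
  have hm1 : 1 ≤ m := by omega
  -- real version of heq
  have heqR : (Nat.fib n : ℝ) - Nat.fib n₁ = 3 ^ m - 3 ^ m₁ := by
    exact_mod_cast congrArg (fun x : ℤ => (x : ℝ)) heq
  -- fib n₁ ≤ fib (n-1)
  have hfmono : (Nat.fib n₁ : ℝ) ≤ Nat.fib (n-1) := by
    exact_mod_cast Nat.fib_mono (by omega)
  -- fib n = fib (n-2) + fib (n-1)
  have hfadd : (Nat.fib n : ℝ) = Nat.fib (n-2) + Nat.fib (n-1) := by
    have : n = (n-2) + 2 := by omega
    rw [this, Nat.fib_add_two]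
    push_cast
    congr 1 <;> congr 1 <;> omega
  -- Chain 1 : φ^(n-4) ≤ fib (n - 2)
  have key1 : goldenRatio ^ ((n:ℤ) - 4) ≤ (Nat.fib (n-2) : ℝ) := by
    rcases Nat.lt_or_ge n 4 with h4 | h4
    · -- n = 3
      have hn3' : n = 3 := by omega
      subst hn3'
      have e : ((3:ℕ):ℤ) - 4 = -1 := by norm_num
      rw [e, zpow_neg_one]
      have e2 : ((Nat.fib (3-2) : ℝ)) = 1 := by norm_num [Nat.fib]
      rw [e2, inv_le_one_iff₀]
      right; exact le_of_lt hg1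
    · have : (n:ℤ) - 4 = ((n - 4 : ℕ) : ℤ) := by omega
      rw [this, zpow_natCast]
      have := gold_pow_le_fib (n - 4)
      have hh : n - 4 + 2 = n - 2 := by omega
      rwa [hh] at this
  have h3m₁ : (0:ℝ) < 3 ^ m₁ := by positivity
  have chain1 : goldenRatio ^ ((n:ℤ) - 4) < 3 ^ m := by
    calc goldenRatio ^ ((n:ℤ) - 4) ≤ (Nat.fib (n-2) : ℝ) := key1
      _ = (Nat.fib n : ℝ) - Nat.fib (n-1) := by rw [hfadd]; ring
      _ ≤ (Nat.fib n : ℝ) - Nat.fib n₁ := by linarith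
      _ = 3 ^ m - 3 ^ m₁ := heqR
      _ < 3 ^ m := by linarith
  -- Chain 2: 2 * 3^(m-1) ≤ φ^(n-1)
  have hfub : (Nat.fib n : ℝ) ≤ goldenRatio ^ (n - 1) := by
    have := fib_le_gold_pow (n - 1)
    have hh : n - 1 + 1 = n := by omega
    rwa [hh] at this
  have h3split : (3:ℝ) ^ m = 3 * 3 ^ (m - 1) := by
    rw [← pow_succ']
    congr 1; omega
  have h3m₁le : (3:ℝ) ^ m₁ ≤ 3 ^ (m - 1) := by
    apply pow_le_pow_right₀ (by norm_num) (by omega)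
  have hzpown1 : goldenRatio ^ ((n:ℤ) - 1) = goldenRatio ^ (n - 1 : ℕ) := by
    have : (n:ℤ) - 1 = ((n - 1 : ℕ) : ℤ) := by omega
    rw [this, zpow_natCast]
  have chain2 : 2 * (3:ℝ) ^ (m - 1) ≤ goldenRatio ^ ((n:ℤ) - 1) := by
    rw [hzpown1]
    have hfibn₁ : (0:ℝ) ≤ Nat.fib n₁ := Nat.cast_nonneg _
    nlinarith
  have h3m10 : (0:ℝ) < 3 ^ (m - 1) := by positivity
  have hzpowm1 : (3:ℝ) ^ ((m:ℤ) - 1) = (3:ℝ) ^ (m - 1 : ℕ) := by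
    have : (m:ℤ) - 1 = ((m - 1 : ℕ) : ℤ) := by omega
    rw [this, zpow_natCast]
  have conj2 : (3:ℝ) ^ ((m:ℤ) - 1) ≤ goldenRatio ^ ((n:ℤ) - 1) := by
    rw [hzpowm1]; linarith
  -- logs
  have hlogg : 0 < Real.log goldenRatio := Real.log_pos hg1
  have hlog3 : 0 < Real.log 3 := Real.log_pos (by norm_num)
  set L := Real.log goldenRatio with hL
  -- strict: 3^(m-1) < φ^(n-1)
  have strict2 : (3:ℝ) ^ ((m:ℤ) - 1) < goldenRatio ^ ((n:ℤ) - 1) := by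
    rw [hzpowm1]; linarith
  have log2 : ((m:ℝ) - 1) * Real.log 3 < ((n:ℝ) - 1) * L := by
    have h := Real.log_lt_log (by positivity) strict2
    rw [Real.log_zpow, Real.log_zpow] at h
    push_cast at h
    exact h
  have log1 : ((n:ℝ) - 4) * L < (m:ℝ) * Real.log 3 := by
    have := Real.log_lt_log (by positivity) chain1
    rw [Real.log_zpow, Real.log_pow] at this
    push_cast at this
    linarith
  refine ⟨chain1, conj2, ?_, ?_⟩
  · have : Real.log 3 / L * ((m:ℝ) - 1) < (n:ℝ) - 1 := by
      rw [div_mul_eq_mul_div, div_lt_iff₀ hlogg]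
      linarith [log2]
    linarith
  · have : (n:ℝ) - 4 < Real.log 3 / L * m := by
      rw [div_mul_eq_mul_div, lt_div_iff₀ hlogg]
      linarith [log1]
    linarith
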